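/- Let l1, l2, l3 be positive integers, l = lcm(l1,l2,l3), s1 = l/l1, s2 = l/l2, and k1, k2 integers with gcd(k1,l1) = gcd(k2,l2) = 1. Then gcd(s1*k1*s2*k2, l) = lcm(s1,s2) * gcd(gcd(s1,s2), gcd(l1,l2)). -/

import Mathlib

lemma key (l l1 l2 a b : ℕ) (hl : 0 < l) (h1 : l1 ∣ l) (h2 : l2 ∣ l)
    (ha : Nat.Coprime a l1) (hb : Nat.Coprime b l2) :
    Nat.gcd (l / l1 * a * (l / l2) * b) l =
      Nat.lcm (l / l1) (l / l2) * Nat.gcd (Nat.gcd (l / l1) (l / l2)) (Nat.gcd l1 l2) := by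
  have hl1 : 0 < l1 := Nat.pos_of_dvd_of_pos h1 hl
  have hl2 : 0 < l2 := Nat.pos_of_dvd_of_pos h2 hl
  have hs1 : 0 < l / l1 := Nat.div_pos (Nat.le_of_dvd hl h1) hl1
  have hs2 : 0 < l / l2 := Nat.div_pos (Nat.le_of_dvd hl h2) hl2
  have hd1 : l / l1 ∣ l := Nat.div_dvd_of_dvd h1
  have hd2 : l / l2 ∣ l := Nat.div_dvd_of_dvd h2
  rcases eq_or_ne a 0 with rfl | hane
  · have : l1 = 1 := (Nat.coprime_zero_left l1).mp ha
    subst this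
    simp only [Nat.div_one, Nat.mul_zero, Nat.zero_mul, Nat.gcd_zero_left,
      Nat.gcd_one_left, Nat.gcd_one_right, Nat.mul_one] at *
    exact (Nat.dvd_antisymm (Nat.lcm_dvd dvd_rfl hd2) (Nat.dvd_lcm_left _ _)).symm
  rcases eq_or_ne b 0 with rfl | hbne
  · have : l2 = 1 := (Nat.coprime_zero_left l2).mp hb
    subst this
    simp only [Nat.div_one, Nat.mul_zero, Nat.gcd_zero_left,
      Nat.gcd_one_left, Nat.gcd_one_right, Nat.mul_one] at *
    exact (Nat.dvd_antisymm (Nat.lcm_dvd hd1 dvd_rfl) (Nat.dvd_lcm_right _ _)).symm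
  apply Nat.eq_of_factorization_eq
  · exact (Nat.gcd_pos_of_pos_right _ hl).ne'
  · exact (Nat.mul_pos (Nat.pos_of_ne_zero (Nat.lcm_ne_zero hs1.ne' hs2.ne'))
      (Nat.gcd_pos_of_pos_right _ (Nat.gcd_pos_of_pos_left _ hl1))).ne'
  intro p
  have hprod : l / l1 * a * (l / l2) * b ≠ 0 :=
    Nat.mul_ne_zero (Nat.mul_ne_zero (Nat.mul_ne_zero hs1.ne' hane) hs2.ne') hbne
  have hle1 : l1.factorization p ≤ l.factorization p :=
    (Nat.factorization_le_iff_dvd hl1.ne' hl.ne').mpr h1 p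
  have hle2 : l2.factorization p ≤ l.factorization p :=
    (Nat.factorization_le_iff_dvd hl2.ne' hl.ne').mpr h2 p
  have hca : a.factorization p ⊓ l1.factorization p = 0 := by
    have := Nat.factorization_gcd hane hl1.ne'
    rw [ha] at this
    simpa using (DFunLike.congr_fun this p).symm
  have hcb : b.factorization p ⊓ l2.factorization p = 0 := by
    have := Nat.factorization_gcd hbne hl2.ne'
    rw [hb] at this
    simpa using (DFunLike.congr_fun this p).symm
  rw [Nat.factorization_gcd hprod hl.ne',
    Nat.factorization_mul (Nat.mul_ne_zero (Nat.mul_ne_zero hs1.ne' hane) hs2.ne') hbne,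
    Nat.factorization_mul (Nat.mul_ne_zero hs1.ne' hane) hs2.ne',
    Nat.factorization_mul hs1.ne' hane,
    Nat.factorization_mul (Nat.lcm_ne_zero hs1.ne' hs2.ne')
      (Nat.gcd_pos_of_pos_right _ (Nat.gcd_pos_of_pos_left _ hl1)).ne',
    Nat.factorization_lcm hs1.ne' hs2.ne',
    Nat.factorization_gcd (Nat.gcd_pos_of_pos_left _ hs1).ne'
      (Nat.gcd_pos_of_pos_left _ hl1).ne',
    Nat.factorization_gcd hs1.ne' hs2.ne',
    Nat.factorization_gcd hl1.ne' hl2.ne',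
    Nat.factorization_div h1, Nat.factorization_div h2]
  simp only [Finsupp.inf_apply, Finsupp.sup_apply, Finsupp.tsub_apply,
    Finsupp.coe_add, Pi.add_apply] at *
  omega

theorem stmt_5 (l1 l2 l3 : ℕ) (h1 : 0 < l1) (h2 : 0 < l2) (h3 : 0 < l3)
    (l : ℕ) (hl : l = Nat.lcm (Nat.lcm l1 l2) l3)
    (k1 k2 : ℤ)
    (hk1 : Int.gcd k1 (l1 : ℤ) = 1) (hk2 : Int.gcd k2 (l2 : ℤ) = 1) :
    Int.gcd (((l / l1 : ℕ) : ℤ) * k1 * ((l / l2 : ℕ) : ℤ) * k2) (l : ℤ) =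
      Nat.lcm (l / l1) (l / l2) *
        Nat.gcd (Nat.gcd (l / l1) (l / l2)) (Nat.gcd l1 l2) := by
  have hlpos : 0 < l := by
    subst hl
    exact Nat.pos_of_ne_zero (Nat.lcm_ne_zero (Nat.lcm_ne_zero h1.ne' h2.ne') h3.ne')
  have hd1 : l1 ∣ l := hl ▸ dvd_trans (Nat.dvd_lcm_left _ _) (Nat.dvd_lcm_left _ _)
  have hd2 : l2 ∣ l := hl ▸ dvd_trans (Nat.dvd_lcm_right _ _) (Nat.dvd_lcm_left _ _)
  have e : Int.gcd (((l / l1 : ℕ) : ℤ) * k1 * ((l / l2 : ℕ) : ℤ) * k2) (l : ℤ) =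
      Nat.gcd (l / l1 * k1.natAbs * (l / l2) * k2.natAbs) l := by
    unfold Int.gcd
    simp only [Int.natAbs_mul, Int.natAbs_natCast]
  rw [e]
  exact key l l1 l2 k1.natAbs k2.natAbs hlpos hd1 hd2
    (by simpa [Int.gcd] using hk1) (by simpa [Int.gcd] using hk2)
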